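/- Define F(k,u) = −λ(u−α) + δk and G(k,u) = −δu + h(p/(k+ε) − c)⁺. Then for all u, ũ ∈ ℝ and all k, k̃ ≥ 0: (F(k,u) − F(k̃,ũ))·(u − ũ) + (G(k,u) − G(k̃,ũ))·(k − k̃) ≤ −λ(u − ũ)². -/
import Mathlib


/-- Monotonicity of the pair `(F, G)` with `F(k,u) = -λ(u-α) + δk` and
`G(k,u) = -δu + h(p/(k+ε) - c)⁺`: for all `u, ũ ∈ ℝ` and `k, k̃ ≥ 0`,
`(F(k,u) - F(k̃,ũ))(u - ũ) + (G(k,u) - G(k̃,ũ))(k - k̃) ≤ -λ(u - ũ)²`. -/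
theorem FG_monotone
    (δ lam h p ε c α : ℝ)
    (hδ : 0 < δ) (hlam : 0 < lam) (hh : 0 < h) (hp : 0 < p) (hε : 0 < ε)
    (u ut k kt : ℝ) (hk : 0 ≤ k) (hkt : 0 ≤ kt) :
    ((-lam * (u - α) + δ * k) - (-lam * (ut - α) + δ * kt)) * (u - ut)
      + ((-δ * u + h * max (p / (k + ε) - c) 0)
          - (-δ * ut + h * max (p / (kt + ε) - c) 0)) * (k - kt)
      ≤ -lam * (u - ut) ^ 2 := by
  have mono : ∀ a b : ℝ, 0 ≤ a → a ≤ b →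
      max (p / (b + ε) - c) 0 ≤ max (p / (a + ε) - c) 0 := by
    intro a b ha hab
    apply max_le_max _ le_rfl
    have h1 : 0 < a + ε := by linarith
    have : p / (b + ε) ≤ p / (a + ε) :=
      div_le_div_of_nonneg_left hp.le h1 (by linarith)
    linarith
  have key : (max (p / (k + ε) - c) 0 - max (p / (kt + ε) - c) 0) * (k - kt) ≤ 0 := by
    rcases le_total k kt with hle | hle
    · exact mul_nonpos_of_nonneg_of_nonpos (by have := mono k kt hk hle; linarith)
        (by linarith)
    · exact mul_nonpos_of_nonpos_of_nonneg (by have := mono kt k hkt hle; linarith)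
        (by linarith)
  nlinarith [sq_nonneg (u - ut), mul_nonneg hh.le (neg_nonneg.mpr key)]
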